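/- For all n ≥ 3, the simple centralizer of x_{n−1} in SB_n is the disjoint union C_n(x_{n−1}) = SB_{n−2} ⊔ x_{n−1}·SB_{n−2}, where x_{n−1}·SB_{n−2} = {x_{n−1} γ : γ ∈ SB_{n−2}}; that is, every element of C_n(x_{n−1}) lies in exactly one of these two sets, and both sets are contained in C_n(x_{n−1}). -/

import Mathlib

/-- The defining relations of the positive braid monoid `MB_∞` on generators
`x i`, `i : ℕ+`: the braid relations and the far-commutation relations. -/
def BraidRel : FreeMonoid ℕ+ → FreeMonoid ℕ+ → Prop := fun a b =>
  (∃ i : ℕ+, a = FreeMonoid.of (i + 1) * FreeMonoid.of i * FreeMonoid.of (i + 1) ∧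
      b = FreeMonoid.of i * FreeMonoid.of (i + 1) * FreeMonoid.of i) ∨
  (∃ i j : ℕ+, i + 2 ≤ j ∧ a = FreeMonoid.of i * FreeMonoid.of j ∧
      b = FreeMonoid.of j * FreeMonoid.of i)

/-- The congruence generated by the braid relations. -/
def braidCon : Con (FreeMonoid ℕ+) := conGen BraidRel

/-- The positive braid monoid `MB_∞`. -/
abbrev MB : Type := braidCon.Quotient

/-- The generator `x_i` of `MB_∞`, for `i : ℕ+`. -/
def braidGen (i : ℕ+) : MB := braidCon.mk' (FreeMonoid.of i)

/-- The generator `x_i` of `MB_∞`, indexed by a natural number `i ≥ 1`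
(junk value `x_1` for `i = 0`). -/
def X (i : ℕ) : MB := braidGen ⟨max i 1, lt_of_lt_of_le one_pos (le_max_right i 1)⟩

/-- `x_i` divides `β`: `β = δ * x_i * ε` for some `δ ε ∈ MB_∞`. -/
def GenDvd (i : ℕ) (β : MB) : Prop := ∃ δ ε : MB, β = δ * X i * ε

/-- `x_i` left-divides `β`: `β = x_i * ε` for some `ε ∈ MB_∞`. -/
def GenDvdL (i : ℕ) (β : MB) : Prop := ∃ ε : MB, β = X i * ε

/-- `x_i` right-divides `β`: `β = δ * x_i` for some `δ ∈ MB_∞`. -/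
def GenDvdR (i : ℕ) (β : MB) : Prop := ∃ δ : MB, β = δ * X i

/-- The set `SB_n` of simple braids in `MB_n`: products of words in the
generators `x_1, …, x_{n-1}` in which each generator appears at most once. -/
def SB (n : ℕ) : Set MB :=
  {β | ∃ w : List ℕ, w.Nodup ∧ (∀ i ∈ w, 1 ≤ i ∧ i < n) ∧ β = (w.map X).prod}

/-- The simple centralizer `C_n(β)` of `β` in `SB_n`. -/
def C (n : ℕ) (β : MB) : Set MB := {γ ∈ SB n | β * γ = γ * β}

/-- `c_n(β)`, the cardinality of the simple centralizer `C_n(β)`. -/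
noncomputable def c (n : ℕ) (β : MB) : ℕ := (C n β).ncard

namespace BraidAux

/-- The transposition `(i, i+1)`. -/
def sw (i : ℕ) : Equiv.Perm ℕ := Equiv.swap i (i + 1)

lemma sw_braid (i : ℕ) : sw (i + 1) * sw i * sw (i + 1) = sw i * sw (i + 1) * sw i := by
  ext x
  simp only [sw, Equiv.Perm.mul_apply, Equiv.swap_apply_def]
  split_ifs <;> omega

lemma sw_comm {i j : ℕ} (h : i + 2 ≤ j) : sw i * sw j = sw j * sw i := by
  ext x
  simp only [sw, Equiv.Perm.mul_apply, Equiv.swap_apply_def]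
  split_ifs <;> omega

def Fhom : FreeMonoid ℕ+ →* Equiv.Perm ℕ := FreeMonoid.lift fun i => sw (i : ℕ)

lemma F_of (i : ℕ+) : Fhom (FreeMonoid.of i) = sw (i : ℕ) := FreeMonoid.lift_eval_of _ i

/-- The permutation representation of the positive braid monoid. -/
def piHom : MB →* Equiv.Perm ℕ :=
  Con.lift braidCon Fhom (by
    apply Con.conGen_le.mpr
    show ∀ a b, BraidRel a b → Con.ker Fhom a b
    rintro a b (⟨i, rfl, rfl⟩ | ⟨i, j, hij, rfl, rfl⟩) <;> rw [Con.ker_rel] <;>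
      simp only [map_mul, F_of]
    · have h1 : ((i + 1 : ℕ+) : ℕ) = (i : ℕ) + 1 := by simp
      rw [h1]; exact sw_braid i
    · exact sw_comm (show (i : ℕ) + 2 ≤ (j : ℕ) by exact_mod_cast hij))

lemma pi_gen (i : ℕ+) : piHom (braidGen i) = sw (i : ℕ) := by
  unfold piHom braidGen
  erw [Con.lift_mk', F_of]

lemma pi_X {i : ℕ} (hi : 1 ≤ i) : piHom (X i) = sw i := by
  unfold X
  erw [pi_gen]
  show sw (max i 1) = sw i
  rw [Nat.max_eq_left hi]

lemma braidGen_comm {a b : ℕ+} (h : a + 2 ≤ b) :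
    braidGen a * braidGen b = braidGen b * braidGen a := by
  unfold braidGen
  rw [← map_mul, ← map_mul]
  have h1 : braidCon (FreeMonoid.of a * FreeMonoid.of b)
      (FreeMonoid.of b * FreeMonoid.of a) :=
    ConGen.Rel.of _ _ (Or.inr ⟨a, b, h, rfl, rfl⟩)
  exact (Con.eq _).mpr h1

lemma X_comm {i j : ℕ} (hi : 1 ≤ i) (hij : i + 2 ≤ j) : X i * X j = X j * X i := by
  unfold X
  apply braidGen_comm
  refine (PNat.coe_le_coe _ _).mp ?_
  show max i 1 + 2 ≤ max j 1
  have : ((2 : ℕ+) : ℕ) = 2 := rfl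
  omega

/-- Apply the transpositions of `u` to `x`, leftmost first. -/
lemma sw_left (a : ℕ) : sw a a = a + 1 := Equiv.swap_apply_left _ _

lemma sw_right (a : ℕ) : sw a (a + 1) = a := Equiv.swap_apply_right _ _

lemma sw_fix {a x : ℕ} (h1 : x ≠ a) (h2 : x ≠ a + 1) : sw a x = x :=
  Equiv.swap_apply_of_ne_of_ne h1 h2

def g (u : List ℕ) (x : ℕ) : ℕ := u.foldl (fun v i => sw i v) x

lemma g_cons (a : ℕ) (t : List ℕ) (x : ℕ) : g (a :: t) x = g t (sw a x) := rfl

lemma g_le {k : ℕ} (u : List ℕ) (hu : ∀ a ∈ u, a ≤ k + 1 ∧ a ≠ k) :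
    ∀ x ≤ k, g u x ≤ k := by
  induction u with
  | nil => exact fun x hx => hx
  | cons a t ih =>
    intro x hx
    rw [g_cons]
    obtain ⟨ha1, ha2⟩ := hu a (List.mem_cons_self)
    refine ih (fun b hb => hu b (List.mem_cons_of_mem a hb)) _ ?_
    simp only [sw, Equiv.swap_apply_def]
    split_ifs <;> omega

lemma g_k1_le {k : ℕ} (u : List ℕ) (hn : u.Nodup) (hu : ∀ a ∈ u, a ≤ k)
    (hk : k ∈ u) : g u (k + 1) ≤ k := by
  induction u with
  | nil => simp at hk
  | cons a t ih =>
    rw [g_cons]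
    rcases eq_or_ne a k with rfl | hak
    · have : sw a (a + 1) = a := Equiv.swap_apply_right a (a + 1)
      rw [this]
      have hnt : a ∉ t := (List.nodup_cons.mp hn).1
      refine g_le t (fun b hb => ⟨?_, ?_⟩) a le_rfl
      · have := hu b (List.mem_cons_of_mem a hb); omega
      · intro hbk; exact hnt (by rw [← hbk]; exact hb)
    · have ha := hu a (List.mem_cons_self)
      have : sw a (k + 1) = k + 1 :=
        Equiv.swap_apply_of_ne_of_ne (by omega) (by omega)
      rw [this]
      have hkt : k ∈ t := by
        rcases List.mem_cons.mp hk with h | h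
        · exact absurd h.symm hak
        · exact h
      exact ih (List.nodup_cons.mp hn).2 (fun b hb => hu b (List.mem_cons_of_mem a hb)) hkt

lemma g_main {k : ℕ} (u : List ℕ) (hn : u.Nodup) (hu : ∀ a ∈ u, a ≤ k + 1)
    (hk : k ∈ u) : g u (k + 2) ≤ k ∨ g u (k + 1) ≤ k := by
  induction u with
  | nil => simp at hk
  | cons a t ih =>
    have hnt := (List.nodup_cons.mp hn).2
    have hat := (List.nodup_cons.mp hn).1
    have hut : ∀ b ∈ t, b ≤ k + 1 := fun b hb => hu b (List.mem_cons_of_mem a hb)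
    rcases eq_or_ne a k with rfl | hak
    · right
      rw [g_cons]
      have : sw a (a + 1) = a := Equiv.swap_apply_right a (a + 1)
      rw [this]
      refine g_le t (fun b hb => ⟨hut b hb, ?_⟩) a le_rfl
      intro hbk; exact hat (by rw [← hbk]; exact hb)
    · have hkt : k ∈ t := by
        rcases List.mem_cons.mp hk with h | h
        · exact absurd h.symm hak
        · exact h
      rcases eq_or_ne a (k + 1) with rfl | hak1
      · left
        rw [g_cons]
        have : sw (k + 1) (k + 2) = k + 1 := Equiv.swap_apply_right (k + 1) (k + 2)
        rw [this]
        refine g_k1_le t hnt (fun b hb => ?_) hkt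
        have h1 := hut b hb
        have h2 : b ≠ k + 1 := fun h => hat (by rw [← h]; exact hb)
        omega
      · have ha := hu a (List.mem_cons_self)
        have h2 : sw a (k + 2) = k + 2 :=
          Equiv.swap_apply_of_ne_of_ne (by omega) (by omega)
        have h1 : sw a (k + 1) = k + 1 :=
          Equiv.swap_apply_of_ne_of_ne (by omega) (by omega)
        rcases ih hnt hut hkt with h | h
        · left; rw [g_cons, h2]; exact h
        · right; rw [g_cons, h1]; exact h

lemma prod_apply (w : List ℕ) (x : ℕ) : (w.map sw).prod x = g w.reverse x := by
  induction w generalizing x with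
  | nil => rfl
  | cons a t ih =>
    simp only [List.map_cons, List.prod_cons, Equiv.Perm.mul_apply, ih,
      List.reverse_cons, g, List.foldl_append, List.foldl_cons, List.foldl_nil]

lemma prod_fix (w : List ℕ) (x : ℕ) (hw : ∀ a ∈ w, a + 1 < x) :
    (w.map sw).prod x = x := by
  induction w with
  | nil => rfl
  | cons a t ih =>
    have ha := hw a (List.mem_cons_self)
    simp only [List.map_cons, List.prod_cons, Equiv.Perm.mul_apply,
      ih (fun b hb => hw b (List.mem_cons_of_mem a hb))]
    exact Equiv.swap_apply_of_ne_of_ne (by omega) (by omega)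

lemma pi_prod {w : List ℕ} (hw : ∀ i ∈ w, 1 ≤ i) :
    piHom ((w.map X).prod) = (w.map sw).prod := by
  rw [map_list_prod, List.map_map]
  congr 1
  exact List.map_congr_left fun i hi => pi_X (hw i hi)

lemma pull_front {j : ℕ} (w : List ℕ) (hj : j ∈ w)
    (hc : ∀ i ∈ w, i ≠ j → X i * X j = X j * X i) :
    (w.map X).prod = X j * ((w.erase j).map X).prod := by
  induction w with
  | nil => simp at hj
  | cons a t ih =>
    rcases eq_or_ne a j with rfl | haj
    · rw [List.erase_cons_head]
      simp [List.prod_cons]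
    · rw [List.erase_cons_tail (by simpa using haj)]
      have hjt : j ∈ t := by
        rcases List.mem_cons.mp hj with h | h
        · exact absurd h.symm haj
        · exact h
      simp only [List.map_cons, List.prod_cons]
      rw [ih hjt (fun i hi hij => hc i (List.mem_cons_of_mem a hi) hij),
        ← mul_assoc, hc a (List.mem_cons_self) haj, mul_assoc]

lemma commute_prod {n : ℕ} (hn : 3 ≤ n) {w : List ℕ}
    (hw : ∀ i ∈ w, 1 ≤ i ∧ i < n - 2) :
    Commute (X (n - 1)) ((w.map X).prod) := by
  apply Commute.list_prod_right
  intro x hx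
  obtain ⟨i, hi, rfl⟩ := List.mem_map.mp hx
  have h := hw i hi
  have hc : X i * X (n - 1) = X (n - 1) * X i := X_comm h.1 (by omega)
  exact (Commute.symm hc)

lemma mem_C {n : ℕ} {β γ : MB} : γ ∈ C n β ↔ γ ∈ SB n ∧ β * γ = γ * β := Iff.rfl

end BraidAux


open BraidAux in
/-- The simple centralizer of `x_{n-1}` in `SB_n` is the disjoint union
`SB_{n-2} ⊔ x_{n-1}·SB_{n-2}` for all `n ≥ 3`. -/
theorem centralizer_top_gen_eq_disjoint_union (n : ℕ) (hn : 3 ≤ n) :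
    C n (X (n - 1)) = SB (n - 2) ∪ (fun γ => X (n - 1) * γ) '' SB (n - 2) ∧
    Disjoint (SB (n - 2)) ((fun γ => X (n - 1) * γ) '' SB (n - 2)) := by
  constructor
  · apply Set.Subset.antisymm
    · intro γ hγ
      obtain ⟨⟨w, hnd, hbound, rfl⟩, hcomm⟩ := hγ
      have hw1 : ∀ i ∈ w, 1 ≤ i := fun i hi => (hbound i hi).1
      -- Step 1: n - 2 does not occur in w
      have hstep1 : (n - 2) ∉ w := by
        intro hmem
        have hp : piHom (X (n - 1) * (w.map X).prod) = piHom ((w.map X).prod * X (n - 1)) := by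
          rw [hcomm]
        rw [map_mul, map_mul, pi_X (by omega : 1 ≤ n - 1), pi_prod hw1] at hp
        have hsw : sw (n - 1) = sw (n - 2 + 1) := by
          congr 1
          omega
        rw [hsw] at hp
        set p := (w.map sw).prod with hpdef
        have hm : p (n - 2 + 2) ≤ n - 2 ∨ p (n - 2 + 1) ≤ n - 2 := by
          rw [hpdef, prod_apply, prod_apply]
          exact g_main w.reverse (List.nodup_reverse.mpr hnd)
            (fun a ha => by have := hbound a (List.mem_reverse.mp ha); omega)
            (List.mem_reverse.mpr hmem)
        have h1 : p (n - 2 + 2) = sw (n - 2 + 1) (p (n - 2 + 1)) := by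
          calc p (n - 2 + 2) = p (sw (n - 2 + 1) (n - 2 + 1)) := by rw [sw_left]
            _ = (p * sw (n - 2 + 1)) (n - 2 + 1) := rfl
            _ = (sw (n - 2 + 1) * p) (n - 2 + 1) := by rw [← hp]
            _ = sw (n - 2 + 1) (p (n - 2 + 1)) := rfl
        have h2 : p (n - 2 + 1) = sw (n - 2 + 1) (p (n - 2 + 2)) := by
          calc p (n - 2 + 1) = p (sw (n - 2 + 1) (n - 2 + 1 + 1)) := by rw [sw_right]
            _ = (p * sw (n - 2 + 1)) (n - 2 + 2) := rfl
            _ = (sw (n - 2 + 1) * p) (n - 2 + 2) := by rw [← hp]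
            _ = sw (n - 2 + 1) (p (n - 2 + 2)) := rfl
        have heq : p (n - 2 + 2) = p (n - 2 + 1) := by
          rcases hm with h | h
          · exact (h2.trans (sw_fix (by omega) (by omega))).symm
          · exact h1.trans (sw_fix (by omega) (by omega))
        have := p.injective heq
        omega
      by_cases hw9 : (n - 1) ∈ w
      · right
        have hcomm' : ∀ i ∈ w, i ≠ n - 1 → X i * X (n - 1) = X (n - 1) * X i := by
          intro i hi hine
          have hb := hbound i hi
          have hi2 : i ≠ n - 2 := fun h => hstep1 (by rw [← h]; exact hi)
          exact X_comm hb.1 (by omega)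
        refine ⟨((w.erase (n - 1)).map X).prod, ?_, (pull_front w hw9 hcomm').symm⟩
        refine ⟨w.erase (n - 1), hnd.erase _, ?_, rfl⟩
        intro i hi
        have hiw := List.mem_of_mem_erase hi
        have hb := hbound i hiw
        have hi1 : i ≠ n - 1 := by
          intro h
          subst h
          exact (List.Nodup.not_mem_erase hnd) hi
        have hi2 : i ≠ n - 2 := fun h => hstep1 (by rw [← h]; exact hiw)
        exact ⟨hb.1, by omega⟩
      · left
        refine ⟨w, hnd, ?_, rfl⟩
        intro i hi
        have hb := hbound i hi
        have h1 : i ≠ n - 1 := fun h => hw9 (by rw [← h]; exact hi)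
        have h2 : i ≠ n - 2 := fun h => hstep1 (by rw [← h]; exact hi)
        exact ⟨hb.1, by omega⟩
    · intro γ hγ
      rcases hγ with ⟨w, hnd, hbound, rfl⟩ | ⟨γ', ⟨w, hnd, hbound, rfl⟩, rfl⟩
      · refine ⟨⟨w, hnd, fun i hi => ⟨(hbound i hi).1, by have := (hbound i hi).2; omega⟩, rfl⟩,
          (commute_prod hn hbound).eq⟩
      · have hc := commute_prod hn hbound
        constructor
        · refine ⟨(n - 1) :: w, ?_, ?_, by simp⟩
          · exact List.nodup_cons.mpr ⟨fun h => by have := (hbound _ h).2; omega, hnd⟩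
          · intro i hi
            rcases List.mem_cons.mp hi with h | h
            · subst h; exact ⟨by omega, by omega⟩
            · have := hbound i h; exact ⟨this.1, by omega⟩
        · show X (n - 1) * (X (n - 1) * (w.map X).prod)
            = (X (n - 1) * (w.map X).prod) * X (n - 1)
          conv_rhs => rw [mul_assoc, ← hc.eq]
  · rw [Set.disjoint_left]
    rintro β ⟨w, hnd, hbound, rfl⟩ ⟨γ', ⟨v, hnv, hbv, rfl⟩, heq⟩
    have e1 : piHom (X (n - 1) * (v.map X).prod) = sw (n - 1) * (v.map sw).prod := by
      rw [map_mul, pi_X (by omega : 1 ≤ n - 1), pi_prod (fun i hi => (hbv i hi).1)]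
    have e2 : piHom ((w.map X).prod) = (w.map sw).prod :=
      pi_prod (fun i hi => (hbound i hi).1)
    have happ : (sw (n - 1) * (v.map sw).prod) n = ((w.map sw).prod) n := by
      rw [← e1, ← e2]
      exact congrArg (fun q : Equiv.Perm ℕ => q n) (congrArg piHom heq)
    have hv : (v.map sw).prod n = n :=
      prod_fix _ _ (fun a ha => by have := (hbv a ha).2; omega)
    have hw0 : (w.map sw).prod n = n :=
      prod_fix _ _ (fun a ha => by have := (hbound a ha).2; omega)
    rw [Equiv.Perm.mul_apply, hv, hw0] at happ
    have hn' : n - 1 + 1 = n := by omega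
    have hsw : sw (n - 1) n = n - 1 := by
      rw [← hn']
      exact sw_right _
    rw [hsw] at happ
    omega
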